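/- (Part of Theorem 6.1.) Let (D1, M) be a periodic first-derivative SBP operator with diagonal mass matrix (M symmetric positive definite and diagonal, M·D1 + D1ᵀ·M = 0). Let ρ ∈ ℝ^m and K ∈ ℝ^m have strictly positive components; define σ(ε)ᵢ = exp(Kᵢ·εᵢ) − 1 and the pointwise stored energy Σᵢ(s) = (exp(Kᵢ·s) − 1)/Kᵢ − s (so that Σᵢ′ = σᵢ and Σᵢ(0) = 0). Let ε, u : ℝ → ℝ^m be differentiable and satisfy ∂ₜε = D1·u, ∂ₜuᵢ = ρᵢ⁻¹·(D1·σ(ε))ᵢ for all t and all i. Then the discrete total energy ∑ᵢ Mᵢᵢ·((1/2)·ρᵢ·uᵢ(t)² + Σᵢ(εᵢ(t))) is constant in t. -/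

import Mathlib

open Matrix

/-- For the semidiscretized variable-coefficient p-system
`∂ₜε = D1 u`, `∂ₜuᵢ = ρᵢ⁻¹ (D1 σ(ε))ᵢ` with `σ(ε)ᵢ = exp(Kᵢ εᵢ) − 1`,
stored energy `Σᵢ(s) = (exp(Kᵢ s) − 1)/Kᵢ − s`, and `(D1, M)` a periodic
first-derivative SBP operator with diagonal mass matrix, the discrete total
energy `∑ᵢ Mᵢᵢ ((1/2) ρᵢ uᵢ² + Σᵢ(εᵢ))` is constant. -/
theorem p_system_conserves_total_energy
    (m : ℕ) (D1 M : Matrix (Fin m) (Fin m) ℝ)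
    (hM : M.PosDef) (hMdiag : M.IsDiag)
    (hD1 : M * D1 + D1ᵀ * M = 0)
    (ρ K : Fin m → ℝ)
    (hρ : ∀ i, 0 < ρ i) (hK : ∀ i, 0 < K i)
    (ε u : ℝ → Fin m → ℝ)
    (hε : ∀ t, HasDerivAt ε (D1 *ᵥ u t) t)
    (hu : ∀ t, HasDerivAt u
      (fun i => (ρ i)⁻¹ * (D1 *ᵥ (fun j => Real.exp (K j * ε t j) - 1)) i) t) :
    ∀ t₁ t₂ : ℝ,
      (∑ i, M i i * ((1 / 2 : ℝ) * ρ i * (u t₁ i) ^ 2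
          + ((Real.exp (K i * ε t₁ i) - 1) / K i - ε t₁ i)))
        = ∑ i, M i i * ((1 / 2 : ℝ) * ρ i * (u t₂ i) ^ 2
          + ((Real.exp (K i * ε t₂ i) - 1) / K i - ε t₂ i)) := by
  -- diagonal matrix-vector product
  have hMv : ∀ (w : Fin m → ℝ) (i : Fin m), (M *ᵥ w) i = M i i * w i := by
    intro w i
    simp only [mulVec, dotProduct]
    rw [Finset.sum_eq_single i]
    · intro j _ hj
      rw [hMdiag (Ne.symm hj)]; ring
    · intro h; exact absurd (Finset.mem_univ i) h
  have key : ∀ t, HasDerivAt (fun t => ∑ i, M i i * ((1 / 2 : ℝ) * ρ i * (u t i) ^ 2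
      + ((Real.exp (K i * ε t i) - 1) / K i - ε t i))) 0 t := by
    intro t
    set σt : Fin m → ℝ := fun j => Real.exp (K j * ε t j) - 1 with hσt
    have hεi : ∀ i, HasDerivAt (fun t => ε t i) ((D1 *ᵥ u t) i) t :=
      fun i => (hasDerivAt_pi.mp (hε t)) i
    have hui : ∀ i, HasDerivAt (fun t => u t i) ((ρ i)⁻¹ * (D1 *ᵥ σt) i) t :=
      fun i => (hasDerivAt_pi.mp (hu t)) i
    have hterm : ∀ i : Fin m, HasDerivAt
        (fun t => M i i * ((1 / 2 : ℝ) * ρ i * (u t i) ^ 2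
          + ((Real.exp (K i * ε t i) - 1) / K i - ε t i)))
        (M i i * (u t i * (D1 *ᵥ σt) i + σt i * (D1 *ᵥ u t) i)) t := by
      intro i
      have h1 : HasDerivAt (fun t => (1 / 2 : ℝ) * ρ i * (u t i) ^ 2)
          (u t i * (D1 *ᵥ σt) i) t := by
        have := ((hui i).pow 2).const_mul ((1 / 2 : ℝ) * ρ i)
        refine this.congr_deriv (Eq.symm ?_)
        have hρi := (hρ i).ne'
        field_simp
        ring
      have h2 : HasDerivAt (fun t => (Real.exp (K i * ε t i) - 1) / K i - ε t i)
          (σt i * (D1 *ᵥ u t) i) t := by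
        have he : HasDerivAt (fun t => Real.exp (K i * ε t i))
            (Real.exp (K i * ε t i) * (K i * (D1 *ᵥ u t) i)) t :=
          ((hεi i).const_mul (K i)).exp
        have := ((he.sub_const 1).div_const (K i)).sub (hεi i)
        refine this.congr_deriv (Eq.symm ?_)
        have hKi := (hK i).ne'
        simp only [hσt]
        field_simp
      have := (h1.add h2).const_mul (M i i)
      exact this
    have hsum := HasDerivAt.sum (fun i (_ : i ∈ Finset.univ) => hterm i)
    have hzero : ∑ i, M i i * (u t i * (D1 *ᵥ σt) i + σt i * (D1 *ᵥ u t) i) = 0 := by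
      have e1 : ∑ i, M i i * (u t i * (D1 *ᵥ σt) i + σt i * (D1 *ᵥ u t) i)
          = u t ⬝ᵥ (M *ᵥ (D1 *ᵥ σt)) + (D1 *ᵥ u t) ⬝ᵥ (M *ᵥ σt) := by
        simp only [dotProduct, hMv, ← Finset.sum_add_distrib]
        apply Finset.sum_congr rfl
        intro i _; ring
      rw [e1]
      have e2 : (D1 *ᵥ u t) ⬝ᵥ (M *ᵥ σt) = u t ⬝ᵥ ((D1ᵀ * M) *ᵥ σt) := by
        rw [← mulVec_mulVec]
        conv_rhs => rw [dotProduct_mulVec, vecMul_transpose]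
      rw [e2, ← dotProduct_add, mulVec_mulVec, ← add_mulVec, hD1, zero_mulVec,
        dotProduct_zero]
    rw [hzero, Finset.sum_fn] at hsum
    exact hsum
  intro t₁ t₂
  exact is_const_of_deriv_eq_zero (fun t => (key t).differentiableAt)
    (fun t => (key t).deriv) t₁ t₂
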